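/- Let X be a nonzero real normed space with unit sphere S_X and closed unit ball B_X, equipped with the kernel k(x,y) := ‖x−y‖. Then q̲(S_X,B_X) = 1; that is, sup over Borel probability measures μ concentrated on S_X of inf_{x∈B_X} U^μ(x) equals 1 (in particular, U^μ(0) = 1 for every such μ). -/

import Mathlib

open MeasureTheory ENNReal
open scoped BigOperators

namespace Rendezvous

variable {X : Type*}

/-- The `n`-th Chebyshev constant `Mₙ(H,L)` of `L` with respect to `H` for the kernel `k`. -/
noncomputable def chebMn (k : X → X → ℝ≥0∞) (n : ℕ) (H L : Set X) : ℝ≥0∞ :=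
  ⨆ w : Fin n → H, ⨅ x : L, (∑ j, k (x : X) ((w j : X))) / (n : ℝ≥0∞)

/-- The `n`-th dual Chebyshev constant `M̄ₙ(H,L)`. -/
noncomputable def chebMnDual (k : X → X → ℝ≥0∞) (n : ℕ) (H L : Set X) : ℝ≥0∞ :=
  ⨅ w : Fin n → H, ⨆ x : L, (∑ j, k (x : X) ((w j : X))) / (n : ℝ≥0∞)

/-- The Chebyshev constant `M(H,L) = sup_{n ≥ 1} Mₙ(H,L)`. -/
noncomputable def chebM (k : X → X → ℝ≥0∞) (H L : Set X) : ℝ≥0∞ :=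
  ⨆ n : ℕ, ⨆ (_ : 1 ≤ n), chebMn k n H L

/-- The dual Chebyshev constant `M̄(H,L) = inf_{n ≥ 1} M̄ₙ(H,L)`. -/
noncomputable def chebMDual (k : X → X → ℝ≥0∞) (H L : Set X) : ℝ≥0∞ :=
  ⨅ n : ℕ, ⨅ (_ : 1 ≤ n), chebMnDual k n H L

/-- The potential `U^μ(x) = ∫ k(x,y) dμ(y)` of a measure. -/
noncomputable def pot [MeasurableSpace X] (k : X → X → ℝ≥0∞) (μ : Measure X) (x : X) : ℝ≥0∞ :=
  ∫⁻ y, k x y ∂μ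

/-- `μ` is a tight (inner regular w.r.t. compact sets) Borel probability measure
concentrated on `H`. -/
def TightProbOn [TopologicalSpace X] [MeasurableSpace X] (μ : Measure X) (H : Set X) : Prop :=
  IsProbabilityMeasure μ ∧ μ.InnerRegular ∧ μ Hᶜ = 0

/-- The quasi-uniform energy `q(H,L) = inf_{μ ∈ M₁(H)} sup_{x ∈ L} U^μ(x)`. -/
noncomputable def qUp [TopologicalSpace X] [MeasurableSpace X] (k : X → X → ℝ≥0∞)
    (H L : Set X) : ℝ≥0∞ :=
  ⨅ (μ : Measure X) (_ : TightProbOn μ H), ⨆ x : L, pot k μ (x : X)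

/-- The dual quasi-uniform energy `q̲(H,L) = sup_{μ ∈ M₁(H)} inf_{x ∈ L} U^μ(x)`. -/
noncomputable def qLow [TopologicalSpace X] [MeasurableSpace X] (k : X → X → ℝ≥0∞)
    (H L : Set X) : ℝ≥0∞ :=
  ⨆ (μ : Measure X) (_ : TightProbOn μ H), ⨅ x : L, pot k μ (x : X)

end Rendezvous

open Rendezvous

/-- For a nonzero real normed space `X` with unit sphere `S_X`, closed
unit ball `B_X` and kernel `k(x,y) = ‖x-y‖`, one has `q̲(S_X,B_X) = 1`; in particular
`U^μ(0) = 1` for every tight Borel probability measure `μ` concentrated on `S_X`. -/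
theorem qLow_sphere_ball_eq_one {X : Type*} [NormedAddCommGroup X]
    [NormedSpace ℝ X] [Nontrivial X] [MeasurableSpace X] [BorelSpace X] :
    qLow (fun x y : X => edist x y) (Metric.sphere (0 : X) 1) (Metric.closedBall (0 : X) 1)
        = 1 ∧
    ∀ μ : Measure X, TightProbOn μ (Metric.sphere (0 : X) 1) →
      pot (fun x y : X => edist x y) μ 0 = 1 := by
  -- Part 2: U^μ(0) = 1 for every tight prob measure on the sphere.
  have hpot0 : ∀ μ : Measure X, TightProbOn μ (Metric.sphere (0 : X) 1) →
      pot (fun x y : X => edist x y) μ 0 = 1 := by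
    rintro μ ⟨hprob, _, hnull⟩
    have hae : ∀ᵐ y ∂μ, y ∈ Metric.sphere (0 : X) 1 := by
      rw [MeasureTheory.ae_iff]
      exact hnull
    have h1 : pot (fun x y : X => edist x y) μ 0 = ∫⁻ _, 1 ∂μ := by
      refine lintegral_congr_ae ?_
      filter_upwards [hae] with y hy
      have : dist y (0 : X) = 1 := Metric.mem_sphere.mp hy
      rw [edist_dist, dist_comm, this, ENNReal.ofReal_one]
    rw [h1, lintegral_one, measure_univ]
  refine ⟨?_, hpot0⟩
  -- pick a point on the sphere
  obtain ⟨a, ha⟩ := (NormedSpace.sphere_nonempty (E := X) (x := 0) (r := 1)).mpr zero_le_one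
  have hna : ‖a‖ = 1 := mem_sphere_zero_iff_norm.mp ha
  have hna' : ‖-a‖ = 1 := by simpa using hna
  -- the measure (δ_a + δ_{-a})/2
  set μ₀ : Measure X := (2 : ℝ≥0∞)⁻¹ • (Measure.dirac a + Measure.dirac (-a)) with hμ₀
  have hsmem : a ∈ Metric.sphere (0 : X) 1 := by
    simpa [Metric.mem_sphere, dist_eq_norm] using hna
  have hsmem' : -a ∈ Metric.sphere (0 : X) 1 := by
    simpa [Metric.mem_sphere, dist_eq_norm] using hna'
  have hμ₀univ : μ₀ Set.univ = 1 := by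
    have e1 : Measure.dirac a (Set.univ : Set X) = 1 :=
      Measure.dirac_apply_of_mem (Set.mem_univ a)
    have e2 : Measure.dirac (-a) (Set.univ : Set X) = 1 :=
      Measure.dirac_apply_of_mem (Set.mem_univ (-a))
    rw [hμ₀, Measure.smul_apply, Measure.add_apply, e1, e2, smul_eq_mul]
    rw [one_add_one_eq_two, ENNReal.inv_mul_cancel two_ne_zero ENNReal.ofNat_ne_top]
  have hprob : IsProbabilityMeasure μ₀ := ⟨hμ₀univ⟩
  -- μ₀ vanishes outside {a, -a}
  have hnull' : ∀ s : Set X, a ∉ s → -a ∉ s → μ₀ s = 0 := by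
    intro s h1 h2
    have e1 : Measure.dirac a s = 0 := by
      refine measure_mono_null (fun y hy => ?_) (?_ : Measure.dirac a ({a}ᶜ : Set X) = 0)
      · exact fun hmem => h1 (by simpa [Set.mem_singleton_iff.mp hmem] using hy)
      · rw [Measure.dirac_apply' _ (measurableSet_singleton a).compl]
        simp
    have e2 : Measure.dirac (-a) s = 0 := by
      refine measure_mono_null (fun y hy => ?_) (?_ : Measure.dirac (-a) ({-a}ᶜ : Set X) = 0)
      · exact fun hmem => h2 (by simpa [Set.mem_singleton_iff.mp hmem] using hy)
      · rw [Measure.dirac_apply' _ (measurableSet_singleton (-a)).compl]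
        simp
    simp [hμ₀, Measure.add_apply, e1, e2]
  have hinner : μ₀.InnerRegular := by
    constructor
    intro U hU r hr
    refine ⟨U ∩ {a, -a}, Set.inter_subset_left, ?_, ?_⟩
    · exact (Set.Finite.subset ((Set.finite_singleton (-a)).insert a) Set.inter_subset_right).isCompact
    · refine lt_of_lt_of_le hr ?_
      have hUsplit : μ₀ U ≤ μ₀ (U ∩ {a, -a}) + μ₀ (U \ {a, -a}) := by
        have : U ⊆ (U ∩ {a, -a}) ∪ (U \ {a, -a}) := by
          intro x hx
          by_cases hx' : x ∈ ({a, -a} : Set X)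
          · exact Or.inl ⟨hx, hx'⟩
          · exact Or.inr ⟨hx, hx'⟩
        exact le_trans (measure_mono this) (measure_union_le _ _)
      have hz : μ₀ (U \ {a, -a}) = 0 := by
        refine hnull' _ ?_ ?_ <;> simp [Set.mem_diff]
      rw [hz, add_zero] at hUsplit
      exact hUsplit
  have hconc : μ₀ (Metric.sphere (0 : X) 1)ᶜ = 0 :=
    hnull' _ (by simpa using hsmem) (by simpa using hsmem')
  have htight : TightProbOn μ₀ (Metric.sphere (0 : X) 1) := ⟨hprob, hinner, hconc⟩
  -- potential of μ₀
  have hpotμ₀ : ∀ x : X, pot (fun x y : X => edist x y) μ₀ x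
      = (2 : ℝ≥0∞)⁻¹ * (edist x a + edist x (-a)) := by
    intro x
    have hmeas : Measurable fun y : X => edist x y :=
      (continuous_const.edist continuous_id).measurable
    simp only [pot, hμ₀, lintegral_smul_measure, lintegral_add_measure,
      lintegral_dirac' _ hmeas, smul_eq_mul]
  have hpot_ge : ∀ x : X, (1 : ℝ≥0∞) ≤ pot (fun x y : X => edist x y) μ₀ x := by
    intro x
    rw [hpotμ₀ x]
    have htri : edist a (-a) ≤ edist x a + edist x (-a) := by
      calc edist a (-a) ≤ edist a x + edist x (-a) := edist_triangle _ _ _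
        _ = edist x a + edist x (-a) := by rw [edist_comm a x]
    have hdist : edist a (-a) = 2 := by
      rw [edist_dist, dist_eq_norm, sub_neg_eq_add]
      have : ‖a + a‖ = 2 := by
        rw [← two_smul ℝ a, norm_smul, hna]
        norm_num
      rw [this]
      norm_num
    calc (1 : ℝ≥0∞) = (2 : ℝ≥0∞)⁻¹ * 2 := by
          rw [ENNReal.inv_mul_cancel two_ne_zero ENNReal.ofNat_ne_top]
      _ ≤ (2 : ℝ≥0∞)⁻¹ * (edist x a + edist x (-a)) := by
          exact mul_le_mul_right (hdist ▸ htri) _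
  apply le_antisymm
  · -- upper bound: inf over ball ≤ value at 0 = 1
    refine iSup_le fun μ => iSup_le fun hμ => ?_
    have h0 : (0 : X) ∈ Metric.closedBall (0 : X) 1 := by
      simp
    exact le_of_le_of_eq (iInf_le _ (⟨0, h0⟩ : Metric.closedBall (0 : X) 1)) (hpot0 μ hμ)
  · -- lower bound via μ₀
    refine le_trans ?_ (le_iSup₂ (f := fun μ (_ : TightProbOn μ (Metric.sphere (0:X) 1)) =>
      ⨅ x : Metric.closedBall (0:X) 1, pot (fun x y : X => edist x y) μ (x : X)) μ₀ htight)
    exact le_iInf fun x => hpot_ge x
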